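/- arXiv:1211.2151 — 3 statements merged into one kernel-verified Lean document; each statement's English description precedes it below -/
import Mathlib

section
/- Let G be an odometric graph and v a vertex. If W is a finite collection of closed non-backtracking walks from v that reveals every edge of G, and W is minimal with this property (no proper subcollection reveals every edge), then |W| = |E(G)|. -/
open SimpleGraph

variable {V : Type*}

/-- A walk is non-backtracking if no vertex equals the vertex two steps later. -/
def NonBacktracking {G : SimpleGraph V} {u v : V} (p : G.Walk u v) : Prop :=
  ∀ i : ℕ, i + 2 < p.support.length → p.support[i]? ≠ p.support[i + 2]?

/-- The weight of a walk: the sum of the weights of its edges, with multiplicity. -/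
def walkWeight {G : SimpleGraph V} (F : Sym2 V → ℝ) {u v : V} (p : G.Walk u v) : ℝ :=
  (p.edges.map F).sum

/-- An edge `e` is revealed by a set `S` of vertices if an integer combination of weights of
closed non-backtracking walks from vertices of `S` equals a nonzero multiple of the weight
of `e`, for every weight function. -/
def RevealedBySet (G : SimpleGraph V) (S : Set V) (e : Sym2 V) : Prop :=
  ∃ (l : ℕ) (w : Fin l → V) (W : ∀ i, G.Walk (w i) (w i)) (c : Fin l → ℤ) (ce : ℤ),
    (∀ i, w i ∈ S) ∧ (∀ i, NonBacktracking (W i)) ∧ (∀ i, c i ≠ 0) ∧ ce ≠ 0 ∧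
    ∀ F : Sym2 V → ℝ, ∑ i, (c i : ℝ) * walkWeight F (W i) = (ce : ℝ) * F e

/-- A walk `W` is revealed by the vertex `v`. -/
def WalkRevealedBy (G : SimpleGraph V) (v : V) {a b : V} (W : G.Walk a b) : Prop :=
  ∃ (l : ℕ) (Ws : Fin l → G.Walk v v) (c : Fin l → ℤ) (cW : ℤ),
    (∀ i, NonBacktracking (Ws i)) ∧ (∀ i, c i ≠ 0) ∧ cW ≠ 0 ∧
    ∀ F : Sym2 V → ℝ, ∑ i, (c i : ℝ) * walkWeight F (Ws i) = (cW : ℝ) * walkWeight F W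

/-- `G` is odometric: every edge is revealed by every single vertex. -/
def Odometric (G : SimpleGraph V) : Prop :=
  ∀ v : V, ∀ e ∈ G.edgeSet, RevealedBySet G {v} e

/-- `u` is a cut vertex of `G`. -/
def IsCutVertex (G : SimpleGraph V) (u : V) : Prop :=
  G.Connected ∧ ¬ (G.induce {x : V | x ≠ u}).Connected

/-- The induced subgraph on `B` is 2-connected. -/
def TwoConnectedOn (G : SimpleGraph V) (B : Set V) : Prop :=
  3 ≤ B.ncard ∧ (G.induce B).Connected ∧ ∀ u ∈ B, (G.induce (B \ {u})).Connected

/-- `B` is a maximal 2-connected block of `G`. -/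
def IsBlock (G : SimpleGraph V) (B : Set V) : Prop :=
  TwoConnectedOn G B ∧ ∀ B', B ⊆ B' → TwoConnectedOn G B' → B' = B

/-- A finite collection of closed walks from `v` reveals the edge `e`. -/
def CollReveals {G : SimpleGraph V} {v : V} [DecidableEq V]
    (𝒲 : Finset (G.Walk v v)) (e : Sym2 V) : Prop :=
  ∃ (l : ℕ) (Ws : Fin l → G.Walk v v) (c : Fin l → ℤ) (ce : ℤ),
    (∀ i, Ws i ∈ 𝒲) ∧ (∀ i, c i ≠ 0) ∧ ce ≠ 0 ∧
    ∀ F : Sym2 V → ℝ, ∑ i, (c i : ℝ) * walkWeight F (Ws i) = (ce : ℝ) * F e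


section Aux


variable {G : SimpleGraph V} [Fintype V] [DecidableEq V]

/-- The edge-multiplicity vector of a walk, as a vector over ℚ. -/
noncomputable def phiW {u w : V} (p : G.Walk u w) : Sym2 V → ℚ :=
  fun x => (p.edges.count x : ℚ)

lemma list_sum_map_eq {α : Type*} [Fintype α] [DecidableEq α] (F : α → ℝ) (l : List α) :
    (l.map F).sum = ∑ x : α, (l.count x : ℝ) * F x := by
  induction l with
  | nil => simp
  | cons a t ih =>
    have key : ∀ x : α, (((a :: t).count x : ℝ)) * F x
        = (t.count x : ℝ) * F x + (if x = a then F x else 0) := by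
      intro x
      by_cases h : x = a
      · simp [List.count_cons, h] <;> push_cast <;> ring
      · simp [List.count_cons, h, Ne.symm h] <;> push_cast <;> ring
    rw [List.map_cons, List.sum_cons, ih, Finset.sum_congr rfl fun x _ => key x,
      Finset.sum_add_distrib, Finset.sum_ite_eq' Finset.univ a F]
    simp [add_comm]

lemma walkWeight_eq {u w : V} (F : Sym2 V → ℝ) (p : G.Walk u w) :
    walkWeight F p = ∑ x : Sym2 V, (p.edges.count x : ℝ) * F x :=
  list_sum_map_eq F p.edges

lemma walkWeight_indicator {u w : V} (p : G.Walk u w) (x : Sym2 V) :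
    walkWeight (fun y => if y = x then 1 else 0) p = (p.edges.count x : ℝ) := by
  rw [walkWeight_eq]
  simp [mul_ite]

/-- From the functional identity to the vector identity. -/
lemma reveals_vec {v : V} {l : ℕ} (Ws : Fin l → G.Walk v v) (c : Fin l → ℤ) (ce : ℤ)
    (e : Sym2 V)
    (h : ∀ F : Sym2 V → ℝ, ∑ i, (c i : ℝ) * walkWeight F (Ws i) = (ce : ℝ) * F e) :
    ∑ i, (c i : ℚ) • phiW (Ws i) = (ce : ℚ) • (Pi.single e 1 : Sym2 V → ℚ) := by
  funext x
  have hF := h (fun y => if y = x then 1 else 0)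
  simp only [walkWeight_indicator] at hF
  have hq : ((∑ i, (c i : ℚ) * ((Ws i).edges.count x : ℚ) : ℚ) : ℝ)
      = (((ce : ℚ) * (if e = x then 1 else 0) : ℚ) : ℝ) := by
    push_cast
    rw [hF]
    congr 1
    split <;> simp
  have hq' := Rat.cast_injective (α := ℝ) hq
  simp only [Finset.sum_apply, Pi.smul_apply, phiW, smul_eq_mul]
  rw [hq']
  simp [Pi.single_apply, eq_comm]

/-- From the vector identity to the functional identity. -/
lemma vec_to_fun {v : V} {l : ℕ} (Ws : Fin l → G.Walk v v) (c : Fin l → ℤ) (ce : ℤ)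
    (e : Sym2 V)
    (h : ∑ i, (c i : ℚ) • phiW (Ws i) = (ce : ℚ) • (Pi.single e 1 : Sym2 V → ℚ)) :
    ∀ F : Sym2 V → ℝ, ∑ i, (c i : ℝ) * walkWeight F (Ws i) = (ce : ℝ) * F e := by
  intro F
  have h' := congrFun h
  calc ∑ i, (c i : ℝ) * walkWeight F (Ws i)
      = ∑ i, ∑ x : Sym2 V, (c i : ℝ) * (((Ws i).edges.count x : ℝ) * F x) := by
        simp only [walkWeight_eq, Finset.mul_sum]
    _ = ∑ x : Sym2 V, (∑ i, (c i : ℝ) * ((Ws i).edges.count x : ℝ)) * F x := by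
        rw [Finset.sum_comm]
        exact Finset.sum_congr rfl fun x _ => by rw [Finset.sum_mul]; exact Finset.sum_congr rfl fun _ _ => by ring
    _ = ∑ x : Sym2 V, ((ce : ℝ) * (if x = e then 1 else 0)) * F x := by
        refine Finset.sum_congr rfl fun x _ => ?_
        have hx := h' x
        simp only [Finset.sum_apply, Pi.smul_apply, phiW, smul_eq_mul,
          Pi.single_apply] at hx
        have : ((∑ i, (c i : ℚ) * ((Ws i).edges.count x : ℚ) : ℚ) : ℝ)
            = (((ce : ℚ) * (if x = e then 1 else 0) : ℚ) : ℝ) := by rw [hx]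
        push_cast at this
        rw [this]
        congr 2
        split <;> simp
    _ = (ce : ℝ) * F e := by simp [ite_mul, mul_ite]

/-- Build `CollReveals` allowing possibly-zero integer coefficients. -/
lemma collReveals_of_fun {v : V} (𝒲 : Finset (G.Walk v v)) (e : Sym2 V) {l : ℕ}
    (Ws : Fin l → G.Walk v v) (c : Fin l → ℤ) (ce : ℤ)
    (hW : ∀ i, Ws i ∈ 𝒲) (hce : ce ≠ 0)
    (h : ∀ F : Sym2 V → ℝ, ∑ i, (c i : ℝ) * walkWeight F (Ws i) = (ce : ℝ) * F e) :
    CollReveals 𝒲 e := by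
  classical
  set s : Finset (Fin l) := Finset.univ.filter (fun i => c i ≠ 0) with hs
  let eqv : Fin s.card ≃ ↥s := s.equivFin.symm
  refine ⟨s.card, fun j => Ws (eqv j), fun j => c (eqv j), ce, fun j => hW _, ?_, hce, ?_⟩
  · intro j
    exact (Finset.mem_filter.mp (eqv j).2).2
  · intro F
    rw [← h F]
    have h1 : ∑ j : Fin s.card, (c (eqv j) : ℝ) * walkWeight F (Ws (eqv j))
        = ∑ i ∈ s, (c i : ℝ) * walkWeight F (Ws i) := by
      rw [← Finset.sum_coe_sort s (fun i => (c i : ℝ) * walkWeight F (Ws i))]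
      exact Fintype.sum_equiv eqv _ _ (fun j => rfl)
    rw [h1]
    refine Finset.sum_subset (Finset.subset_univ s) (fun i _ hi => ?_)
    have : c i = 0 := by
      by_contra hne
      exact hi (Finset.mem_filter.mpr ⟨Finset.mem_univ i, hne⟩)
    simp [this]

lemma collReveals_of_mem_span {v : V} (𝒲 : Finset (G.Walk v v)) (e : Sym2 V)
    (h : (Pi.single e 1 : Sym2 V → ℚ) ∈
      Submodule.span ℚ (phiW '' (𝒲 : Set (G.Walk v v)))) :
    CollReveals 𝒲 e := by
  classical
  obtain ⟨n, f, g, hg⟩ := Submodule.mem_span_set'.mp h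
  have hmem : ∀ i, ∃ W, W ∈ 𝒲 ∧ phiW W = (g i : Sym2 V → ℚ) := by
    intro i
    obtain ⟨W, hW, hWe⟩ := (g i).2
    exact ⟨W, hW, hWe⟩
  choose W hW hphi using hmem
  set D : ℕ := ∏ i, (f i).den with hD
  have hDpos : 0 < D := Finset.prod_pos fun i _ => (f i).pos
  set c : Fin n → ℤ := fun i => (f i).num * ((D / (f i).den : ℕ) : ℤ) with hc
  have hkey : ∀ i, (c i : ℚ) = f i * (D : ℚ) := by
    intro i
    have hdvd : (f i).den ∣ D := Finset.dvd_prod_of_mem _ (Finset.mem_univ i)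
    have h1 : ((f i).den : ℚ) * ((D / (f i).den : ℕ) : ℚ) = (D : ℚ) := by
      rw [← Nat.cast_mul, Nat.mul_div_cancel' hdvd]
    have h2 : ((f i).num : ℚ) = f i * ((f i).den : ℚ) := (Rat.mul_den_eq_num (f i)).symm
    rw [hc]
    show (((f i).num * ((D / (f i).den : ℕ) : ℤ) : ℤ) : ℚ) = _
    rw [Int.cast_mul, Int.cast_natCast, h2, mul_assoc, h1]
  have hvec : ∑ i, (c i : ℚ) • phiW (W i) = ((D : ℤ) : ℚ) • (Pi.single e 1 : Sym2 V → ℚ) := by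
    have : ∀ i, (c i : ℚ) • phiW (W i) = (D : ℚ) • (f i • (g i : Sym2 V → ℚ)) := by
      intro i
      rw [hphi i, hkey i, smul_smul, mul_comm]
    rw [Finset.sum_congr rfl fun i _ => this i, ← Finset.smul_sum, hg]
    norm_num
  exact collReveals_of_fun 𝒲 e W c (D : ℤ) hW (by exact_mod_cast hDpos.ne')
    (vec_to_fun W c (D : ℤ) e hvec)

lemma mem_span_of_collReveals {v : V} (𝒲 : Finset (G.Walk v v)) (e : Sym2 V)
    (h : CollReveals 𝒲 e) :
    (Pi.single e 1 : Sym2 V → ℚ) ∈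
      Submodule.span ℚ (phiW '' (𝒲 : Set (G.Walk v v))) := by
  obtain ⟨l, Ws, c, ce, hmem, hc, hce, hF⟩ := h
  have hvec := reveals_vec Ws c ce e hF
  have hce' : (ce : ℚ) ≠ 0 := by exact_mod_cast hce
  have heq : (Pi.single e 1 : Sym2 V → ℚ) = (ce : ℚ)⁻¹ • ∑ i, (c i : ℚ) • phiW (Ws i) := by
    rw [hvec, smul_smul, inv_mul_cancel₀ hce', one_smul]
  rw [heq]
  exact Submodule.smul_mem _ _ (Submodule.sum_mem _ fun i _ =>
    Submodule.smul_mem _ _ (Submodule.subset_span ⟨Ws i, hmem i, rfl⟩))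

end Aux

/-- any minimal collection of closed non-backtracking walks from `v` revealing
every edge of an odometric graph has cardinality `|E(G)|`. -/
theorem minimal_collection_card {G : SimpleGraph V} [Fintype V] [DecidableEq V]
    [DecidableRel G.Adj] (hodo : Odometric G) (v : V)
    (𝒲 : Finset (G.Walk v v)) (hNB : ∀ W ∈ 𝒲, NonBacktracking W)
    (hrev : ∀ e ∈ G.edgeSet, CollReveals 𝒲 e)
    (hmin : ∀ 𝒲' : Finset (G.Walk v v), 𝒲' ⊂ 𝒲 → ¬ ∀ e ∈ G.edgeSet, CollReveals 𝒲' e) :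
    𝒲.card = G.edgeFinset.card := by
  classical
  let f : ↥𝒲 → (Sym2 V → ℚ) := fun W => phiW (W : G.Walk v v)
  have hrf : Set.range f = phiW '' (𝒲 : Set (G.Walk v v)) := by
    ext x
    constructor
    · rintro ⟨W, rfl⟩
      exact ⟨↑W, W.2, rfl⟩
    · rintro ⟨W, hW, rfl⟩
      exact ⟨⟨W, hW⟩, rfl⟩
  -- the family f is linearly independent
  have hind : LinearIndependent ℚ f := by
    rw [linearIndependent_iff_notMem_span]
    intro i hi
    refine hmin (𝒲.erase ↑i) (Finset.erase_ssubset i.2) (fun e he => ?_)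
    apply collReveals_of_mem_span
    have himg : f '' (Set.univ \ {i}) ⊆ phiW '' ((𝒲.erase ↑i : Finset (G.Walk v v)) :
        Set (G.Walk v v)) := by
      rintro _ ⟨j, hj, rfl⟩
      refine ⟨↑j, ?_, rfl⟩
      simp only [Finset.coe_erase, Set.mem_diff, Set.mem_singleton_iff]
      exact ⟨j.2, fun hji => hj.2 (Subtype.ext hji)⟩
    have h2 : Submodule.span ℚ (phiW '' (𝒲 : Set (G.Walk v v)))
        ≤ Submodule.span ℚ (phiW '' ((𝒲.erase ↑i : Finset (G.Walk v v)) :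
          Set (G.Walk v v))) := by
      rw [Submodule.span_le]
      rintro _ ⟨W, hW, rfl⟩
      by_cases hWi : W = ↑i
      · subst hWi
        exact Submodule.span_mono himg hi
      · exact Submodule.subset_span ⟨W, by
          simp only [Finset.coe_erase, Set.mem_diff, Set.mem_singleton_iff]
          exact ⟨hW, hWi⟩, rfl⟩
    exact h2 (mem_span_of_collReveals 𝒲 e (hrev e he))
  -- the indicator family
  let g : ↥G.edgeFinset → (Sym2 V → ℚ) := fun e => Pi.single (↑e : Sym2 V) 1
  have hg : LinearIndependent ℚ g := by
    have hb := (Pi.basisFun ℚ (Sym2 V)).linearIndependent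
    have h2 := hb.comp (Subtype.val : ↥G.edgeFinset → Sym2 V) Subtype.val_injective
    have : g = (⇑(Pi.basisFun ℚ (Sym2 V))) ∘ (Subtype.val : ↥G.edgeFinset → Sym2 V) := by
      funext e
      simp [g, Pi.basisFun_apply]
    rw [this]
    exact h2
  -- spans coincide
  have hspan : Submodule.span ℚ (Set.range f) = Submodule.span ℚ (Set.range g) := by
    apply le_antisymm
    · rw [Submodule.span_le, hrf]
      rintro _ ⟨W, hW, rfl⟩
      rw [show phiW W = ∑ x : Sym2 V, phiW W x • (Pi.single x 1 : Sym2 V → ℚ) by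
        conv_lhs => rw [pi_eq_sum_univ (phiW W)]
        refine Finset.sum_congr rfl fun x _ => ?_
        congr 1
        funext j
        simp [Pi.single_apply, eq_comm]]
      refine Submodule.sum_mem _ fun x _ => ?_
      by_cases hx : phiW W x = 0
      · simp [hx]
      · have hxe : x ∈ W.edges := by
          by_contra hxe
          exact hx (by simp [phiW, List.count_eq_zero.mpr hxe])
        have : x ∈ G.edgeFinset := mem_edgeFinset.mpr (W.edges_subset_edgeSet hxe)
        exact Submodule.smul_mem _ _ (Submodule.subset_span ⟨⟨x, this⟩, rfl⟩)
    · rw [Submodule.span_le]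
      rintro _ ⟨⟨e, he⟩, rfl⟩
      have := mem_span_of_collReveals 𝒲 e (hrev e (mem_edgeFinset.mp he))
      rw [← hrf] at this
      exact this
  have h1 := finrank_span_eq_card hind
  have h2 := finrank_span_eq_card hg
  rw [hspan, h2] at h1
  rw [← Fintype.card_coe 𝒲, ← Fintype.card_coe G.edgeFinset, h1]
end

section
/- Let C be a closed non-backtracking walk from u whose first and last edges are distinct, and let W be a non-backtracking walk from v to u whose last edge differs from both the first and last edges of C. Then W ∘ C ∘ reverse(W) and W ∘ C ∘ C ∘ reverse(W) are closed non-backtracking walks from v, and for every edge-weight function F, 2·F(W) = 2·F(W ∘ C ∘ reverse(W)) − F(W ∘ C ∘ C ∘ reverse(W)). -/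
open SimpleGraph

variable {V : Type*}

lemma nb_cons {G : SimpleGraph V} {u w x : V} (h : G.Adj u w) (r : G.Walk w x) :
    NonBacktracking (Walk.cons h r) ↔
      NonBacktracking r ∧ ∀ y ∈ r.support[1]?, u ≠ y := by
  constructor
  · intro hnb
    refine ⟨fun i hi => ?_, fun y hy => ?_⟩
    · have := hnb (i + 1) (by simp only [Walk.support_cons, List.length_cons]; omega)
      simpa [Walk.support_cons] using this
    · have hlen : 2 < (Walk.cons h r).support.length := by
        simp only [Walk.support_cons, List.length_cons]
        have : 1 < r.support.length := by
          by_contra hc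
          push_neg at hc
          have : r.support[1]? = none := by
            apply List.getElem?_eq_none
            omega
          simp [this] at hy
        omega
      have := hnb 0 hlen
      simp only [Walk.support_cons] at this
      intro he
      apply this
      subst he
      simpa using hy.symm
  · rintro ⟨hnb, hy⟩ i hi
    match i with
    | 0 =>
      simp only [Walk.support_cons, List.length_cons] at hi ⊢
      have h1 : r.support[1]? = some (r.support[1]'(by omega)) :=
        List.getElem?_eq_getElem (by omega)
      have := hy _ h1
      simp only [List.getElem?_cons_zero]
      rw [show (0:ℕ)+2 = 1+1 by rfl, List.getElem?_cons_succ, h1]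
      simpa using this
    | i + 1 =>
      simp only [Walk.support_cons, List.length_cons] at hi ⊢
      have := hnb i (by omega)
      simpa [List.getElem?_cons_succ] using this

lemma nb_iff_chain {G : SimpleGraph V} : ∀ {u v : V} (p : G.Walk u v),
    NonBacktracking p ↔ p.edges.Chain' (· ≠ ·) := by
  intro u v p
  simp only [List.Chain']
  induction p with
  | nil =>
    simp only [Walk.edges_nil, List.isChain_nil, iff_true]
    intro i hi
    simp [Walk.support_nil] at hi
  | cons h r ih =>
    rw [nb_cons, ih, Walk.edges_cons, List.isChain_cons]
    rw [and_comm]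
    refine and_congr_left fun _ => ?_
    cases r with
    | nil => simp [Walk.support_nil, Walk.edges_nil]
    | cons h' q =>
      simp only [Walk.support_cons, Walk.edges_cons, List.head?_cons,
        List.getElem?_cons_succ, List.getElem?_cons_zero, Option.mem_def,
        Option.some.injEq, forall_eq']
      rw [Walk.support_eq_cons q]
      simp only [List.getElem?_cons_zero, Option.some.injEq, forall_eq']
      rw [ne_eq, ne_eq, not_iff_not]
      constructor
      · intro h1; subst h1; exact Sym2.eq_swap
      · intro h1
        rcases Sym2.eq_iff.mp h1 with ⟨ha, hb⟩ | ⟨ha, hb⟩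
        · exact (h.ne ha).elim
        · exact ha

lemma nb_append {G : SimpleGraph V} {a b c : V} {p : G.Walk a b} {q : G.Walk b c}
    (hp : NonBacktracking p) (hq : NonBacktracking q)
    (hpq : p.edges.getLast? ≠ q.edges.head?) :
    NonBacktracking (p.append q) := by
  rw [nb_iff_chain] at hp hq ⊢
  simp only [List.Chain'] at hp hq ⊢
  rw [Walk.edges_append, List.isChain_append]
  refine ⟨hp, hq, fun x hx y hy => ?_⟩
  intro he
  apply hpq
  rw [hx, hy, he]

lemma nb_reverse {G : SimpleGraph V} {a b : V} {p : G.Walk a b}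
    (hp : NonBacktracking p) : NonBacktracking p.reverse := by
  rw [nb_iff_chain] at hp ⊢
  simp only [List.Chain'] at hp ⊢
  rw [Walk.edges_reverse, List.isChain_reverse]
  simpa [Function.flip_def, ne_comm] using hp

lemma weight_append {G : SimpleGraph V} (F : Sym2 V → ℝ) {a b c : V}
    (p : G.Walk a b) (q : G.Walk b c) :
    walkWeight F (p.append q) = walkWeight F p + walkWeight F q := by
  simp [walkWeight, Walk.edges_append]

lemma weight_reverse {G : SimpleGraph V} (F : Sym2 V → ℝ) {a b : V}
    (p : G.Walk a b) : walkWeight F p.reverse = walkWeight F p := by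
  simp [walkWeight, Walk.edges_reverse, List.sum_reverse]

/-- if `C` is a closed non-backtracking walk from `u` with distinct first and
last edges, and `W` is a non-backtracking walk from `v` to `u` whose last edge differs from
both the first and last edges of `C`, then `W ∘ C ∘ W⁻¹` and `W ∘ C ∘ C ∘ W⁻¹` are closed
non-backtracking walks from `v` and `2 F(W) = 2 F(W ∘ C ∘ W⁻¹) - F(W ∘ C ∘ C ∘ W⁻¹)`. -/
theorem doubling_trick {G : SimpleGraph V} {u v : V} (C : G.Walk u u) (W : G.Walk v u)
    (hC : NonBacktracking C) (hW : NonBacktracking W)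
    (hCfl : C.edges.head? ≠ C.edges.getLast?)
    (hWf : W.edges.getLast? ≠ C.edges.head?)
    (hWl : W.edges.getLast? ≠ C.edges.getLast?) :
    NonBacktracking (W.append (C.append W.reverse)) ∧
    NonBacktracking (W.append (C.append (C.append W.reverse))) ∧
    ∀ F : Sym2 V → ℝ,
      2 * walkWeight F W =
        2 * walkWeight F (W.append (C.append W.reverse)) -
          walkWeight F (W.append (C.append (C.append W.reverse))) := by
  have hCne : C.edges ≠ [] := by
    intro h; apply hCfl; rw [h]; rfl
  have hrevh : W.reverse.edges.head? = W.edges.getLast? := by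
    rw [Walk.edges_reverse, List.head?_reverse]
  have hCWr : NonBacktracking (C.append W.reverse) :=
    nb_append hC (nb_reverse hW) (by rw [hrevh]; exact fun h => hWl h.symm)
  have hCCWr : NonBacktracking (C.append (C.append W.reverse)) := by
    refine nb_append hC hCWr ?_
    rw [Walk.edges_append, List.head?_append_of_ne_nil _ hCne]
    exact fun h => hCfl h.symm
  have hhead1 : (C.append W.reverse).edges.head? = C.edges.head? := by
    rw [Walk.edges_append, List.head?_append_of_ne_nil _ hCne]
  have hhead2 : (C.append (C.append W.reverse)).edges.head? = C.edges.head? := by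
    rw [Walk.edges_append, List.head?_append_of_ne_nil _ hCne]
  refine ⟨nb_append hW hCWr (by rw [hhead1]; exact hWf),
    nb_append hW hCCWr (by rw [hhead2]; exact hWf), fun F => ?_⟩
  simp only [weight_append, weight_reverse]
  ring
end

section
/- Let G be a connected graph with minimum degree at least 3, and let u be a cut vertex of G all of whose incident edges are bridges. Then there exist two distinct neighbors x, y of u and closed non-backtracking walks C_x from x and C_y from y such that C_x never traverses the edge {u,x} and C_y never traverses the edge {u,y}; consequently the walk {u,x} ∘ C_x ∘ {x,u} ∘ {u,y} ∘ C_y ∘ {y,u} is a closed non-backtracking walk from u whose first and last edges are distinct. -/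
open SimpleGraph

variable {V : Type*}

lemma walk_of_seq {G : SimpleGraph V} (n : ℕ) :
    ∀ (w : ℕ → V), (∀ i < n, G.Adj (w i) (w (i+1))) →
    ∃ W : G.Walk (w 0) (w n), W.support = (List.range (n+1)).map w := by
  induction n with
  | zero => exact fun w _ => ⟨Walk.nil, by simp [List.range_succ]⟩
  | succ n ih =>
    intro w h
    obtain ⟨W, hW⟩ := ih (fun i => w (i+1)) (fun i hi => h (i+1) (by omega))
    refine ⟨Walk.cons (h 0 (by omega)) W, ?_⟩
    rw [Walk.support_cons, hW]
    conv_rhs => rw [List.range_succ_eq_map, List.map_cons, List.map_map]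
    rfl

lemma nb_of_support_map {G : SimpleGraph V} {a b : V} (W : G.Walk a b) (n : ℕ) (Z : ℕ → V)
    (hs : W.support = (List.range (n+1)).map Z)
    (h : ∀ i, i + 2 ≤ n → Z i ≠ Z (i + 2)) : NonBacktracking W := by
  intro i hi
  rw [hs] at hi ⊢
  simp only [List.length_map, List.length_range] at hi
  rw [List.getElem?_map, List.getElem?_map, List.getElem?_range (by omega),
    List.getElem?_range (by omega)]
  simpa using h i (by omega)

lemma exists_step {G : SimpleGraph V} [Fintype V] [DecidableRel G.Adj]
    (hdeg : ∀ x, 3 ≤ G.degree x) (u a b : V) :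
    ∃ c, G.Adj b c ∧ c ≠ a ∧ c ≠ u := by
  classical
  have h1 : (G.neighborFinset b \ {a, u}).Nonempty := by
    rw [← Finset.card_pos]
    have h2 : ({a, u} : Finset V).card ≤ 2 :=
      (Finset.card_insert_le _ _).trans (by simp)
    have h3 := Finset.le_card_sdiff ({a, u} : Finset V) (G.neighborFinset b)
    have h4 : 3 ≤ (G.neighborFinset b).card := hdeg b
    omega
  obtain ⟨c, hc⟩ := h1
  simp only [Finset.mem_sdiff, mem_neighborFinset, Finset.mem_insert,
    Finset.mem_singleton, not_or] at hc
  exact ⟨c, hc.1, hc.2.1, hc.2.2⟩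

private noncomputable def nbNext {G : SimpleGraph V} [Fintype V] [DecidableRel G.Adj]
    (hdeg : ∀ x, 3 ≤ G.degree x) (u : V)
    (p : {p : V × V // G.Adj p.1 p.2 ∧ p.1 ≠ u ∧ p.2 ≠ u}) :
    {p : V × V // G.Adj p.1 p.2 ∧ p.1 ≠ u ∧ p.2 ≠ u} :=
  ⟨(p.1.2, (exists_step hdeg u p.1.1 p.1.2).choose),
    (exists_step hdeg u p.1.1 p.1.2).choose_spec.1, p.2.2.2,
    (exists_step hdeg u p.1.1 p.1.2).choose_spec.2.2⟩

lemma exists_closed_nb {G : SimpleGraph V} [Fintype V] [DecidableRel G.Adj]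
    (hdeg : ∀ x, 3 ≤ G.degree x) (u x : V) (hxu : x ≠ u) :
    ∃ (m : ℕ) (Z : ℕ → V) (Cx : G.Walk x x),
      2 ≤ m ∧ Cx.support = (List.range (m+1)).map Z ∧
      Z 0 = x ∧ Z m = x ∧ (∀ i, i ≤ m → Z i ≠ u) ∧ (∀ i, i + 2 ≤ m → Z i ≠ Z (i+2)) := by
  classical
  obtain ⟨c0, hc1, -, hc2⟩ := exists_step hdeg u u x
  set S : ℕ → {p : V × V // G.Adj p.1 p.2 ∧ p.1 ≠ u ∧ p.2 ≠ u} :=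
    fun n => (nbNext hdeg u)^[n] ⟨(x, c0), hc1, hxu, hc2⟩ with hS
  set v : ℕ → V := fun n => (S n).1.1 with hv
  have hSsucc : ∀ n, S (n+1) = nbNext hdeg u (S n) := by
    intro n; simp only [hS, Function.iterate_succ_apply']
  have hvs : ∀ n, v (n+1) = (S n).1.2 := by
    intro n; simp only [hv, hSsucc n]; rfl
  have hadj : ∀ n, G.Adj (v n) (v (n+1)) := by
    intro n; rw [hvs]; exact (S n).2.1
  have hneu : ∀ n, v n ≠ u := fun n => (S n).2.2.1
  have hnb : ∀ n, v (n+2) ≠ v n := by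
    intro n
    have h := (exists_step hdeg u (S n).1.1 (S n).1.2).choose_spec.2.1
    rw [hvs (n+1), hSsucc n]
    exact h
  have hv0 : v 0 = x := rfl
  -- pigeonhole
  have hex : ∃ k, ∃ j < k, v j = v k := by
    obtain ⟨a, b, hab, he⟩ := Fintype.exists_ne_map_eq_of_card_lt
      (fun i : Fin (Fintype.card V + 1) => v i) (by simp)
    rcases lt_or_gt_of_ne hab with h | h
    · exact ⟨b, a, h, he⟩
    · exact ⟨a, b, h, he.symm⟩
  set k := Nat.find hex with hkdef
  obtain ⟨j, hjk, hvjk⟩ := Nat.find_spec hex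
  rw [← hkdef] at hjk hvjk
  have hinj : ∀ i1 i2, i1 < i2 → i2 < k → v i1 ≠ v i2 := by
    intro i1 i2 h12 h2k hne
    exact Nat.find_min hex h2k ⟨i1, h12, hne⟩
  have hk2 : 2 ≤ k := by
    by_contra h
    have hj0 : j = 0 := by omega
    have hk1 : k = 1 := by omega
    rw [hj0, hk1] at hvjk
    exact (hadj 0).ne hvjk
  set m := k + j with hm
  set w : ℕ → V := fun i => if i ≤ k then v i else v (j - (i - k)) with hw
  have hwle : ∀ i, i ≤ k → w i = v i := by intro i hi; simp only [hw, if_pos hi]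
  have hwgt : ∀ t, 1 ≤ t → w (k + t) = v (j - t) := by
    intro t ht; simp only [hw]
    rw [if_neg (by omega)]; congr 1; omega
  have hadjw : ∀ i < m, G.Adj (w i) (w (i+1)) := by
    intro i hi
    rcases (by omega : i + 1 ≤ k ∨ (i = k ∧ 1 ≤ j) ∨ (k + 1 ≤ i ∧ i + 1 ≤ k + j)) with
      h | ⟨h, hj⟩ | ⟨hta, htb⟩
    · rw [hwle i (by omega), hwle (i+1) h]; exact hadj i
    · subst h
      rw [hwle k le_rfl, show k + 1 = k + 1 from rfl, hwgt 1 le_rfl, ← hvjk]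
      have h := (hadj (j-1)).symm
      rwa [show j - 1 + 1 = j from by omega] at h
    · obtain ⟨t, ht1, ht2, rfl⟩ : ∃ t, 1 ≤ t ∧ t + 1 ≤ j ∧ i = k + t := ⟨i - k, by omega, by omega, by omega⟩
      rw [hwgt t (by omega), show k + t + 1 = k + (t+1) from by omega, hwgt (t+1) (by omega)]
      have h := (hadj (j-t-1)).symm
      rw [show j - t - 1 + 1 = j - t from by omega] at h
      rwa [show j - (t+1) = j - t - 1 from by omega]
  have hnbw : ∀ i, i + 2 ≤ m → w i ≠ w (i+2) := by
    intro i hi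
    rcases (by omega : i + 2 ≤ k ∨ (i + 1 = k ∧ 1 ≤ j) ∨ (i = k ∧ 2 ≤ j) ∨
        (k + 1 ≤ i ∧ i + 2 ≤ k + j)) with h | ⟨h, hj⟩ | ⟨h, hj⟩ | ⟨hta, htb⟩
    · rw [hwle i (by omega), hwle (i+2) h]; exact (hnb i).symm
    · rw [hwle i (by omega), show i + 2 = k + 1 from by omega, hwgt 1 le_rfl]
      have := hinj (j-1) (k-1) (by omega) (by omega)
      rw [show i = k - 1 from by omega]
      exact this.symm
    · subst h
      rw [hwle k le_rfl, show k + 2 = k + 2 from rfl, hwgt 2 (by omega), ← hvjk]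
      have h := hnb (j-2)
      rwa [show j - 2 + 2 = j from by omega] at h
    · obtain ⟨t, ht1, ht2, rfl⟩ : ∃ t, 1 ≤ t ∧ t + 2 ≤ j ∧ i = k + t := ⟨i - k, by omega, by omega, by omega⟩
      rw [hwgt t (by omega), show k + t + 2 = k + (t+2) from by omega, hwgt (t+2) (by omega)]
      have h := hnb (j-t-2)
      rw [show j - t - 2 + 2 = j - t from by omega] at h
      rwa [show j - (t+2) = j - t - 2 from by omega]
  have hneuw : ∀ i, w i ≠ u := by
    intro i; simp only [hw]; split_ifs
    · exact hneu i
    · exact hneu _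
  obtain ⟨W, hWs⟩ := walk_of_seq m w hadjw
  have hw0 : w 0 = x := by rw [hwle 0 (by omega)]; exact hv0
  have hwm : w m = x := by
    rcases Nat.eq_zero_or_pos j with hj | hj
    · rw [hm, hj, Nat.add_zero, hwle k (by omega)]
      rw [hj] at hvjk; rw [← hvjk]; exact hv0
    · rw [hm, hwgt j hj, Nat.sub_self]; exact hv0
  refine ⟨m, w, (W.copy hw0 hwm), by omega, ?_, hw0, hwm, fun i _ => hneuw i, hnbw⟩
  rw [Walk.support_copy]; exact hWs

/-- if `u` is a cut vertex all of whose incident edges are bridges in a connected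
graph of minimum degree at least 3, then `u` has two distinct neighbors `x`, `y` admitting
closed non-backtracking walks `Cx` (from `x`, avoiding `{u,x}`) and `Cy` (from `y`, avoiding
`{u,y}`), so that `{u,x} ∘ Cx ∘ {x,u} ∘ {u,y} ∘ Cy ∘ {y,u}` is a closed non-backtracking walk
from `u` with distinct first and last edges. -/
theorem cut_vertex_all_bridges_walk {G : SimpleGraph V} [Fintype V] [DecidableRel G.Adj]
    (hconn : G.Connected) (hdeg : ∀ x, 3 ≤ G.degree x)
    (u : V) (hcut : IsCutVertex G u) (hbr : ∀ w : V, G.Adj u w → G.IsBridge s(u, w)) :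
    ∃ (x y : V) (hx : G.Adj u x) (hy : G.Adj u y), x ≠ y ∧
      ∃ (Cx : G.Walk x x) (Cy : G.Walk y y),
        NonBacktracking Cx ∧ NonBacktracking Cy ∧
        s(u, x) ∉ Cx.edges ∧ s(u, y) ∉ Cy.edges ∧
        ∃ C : G.Walk u u,
          C = SimpleGraph.Walk.cons hx (Cx.append (SimpleGraph.Walk.cons hx.symm
                (SimpleGraph.Walk.cons hy (Cy.append
                  (SimpleGraph.Walk.cons hy.symm SimpleGraph.Walk.nil))))) ∧
          NonBacktracking C ∧ C.edges.head? ≠ C.edges.getLast? := by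
  classical
  have h1 : 1 < (G.neighborFinset u).card := lt_of_lt_of_le (by norm_num) (hdeg u)
  obtain ⟨x, hxm, y, hym, hxy⟩ := Finset.one_lt_card.mp h1
  rw [mem_neighborFinset] at hxm hym
  obtain ⟨mx, Zx, Cx, hmx2, hCxs, hZx0, hZxm, hZxu, hZxnb⟩ := exists_closed_nb hdeg u x hxm.ne'
  obtain ⟨my, Zy, Cy, hmy2, hCys, hZy0, hZym, hZyu, hZynb⟩ := exists_closed_nb hdeg u y hym.ne'
  have hux : u ∉ Cx.support := by
    rw [hCxs]; simp only [List.mem_map, List.mem_range]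
    rintro ⟨i, hi, he⟩; exact hZxu i (by omega) he
  have huy : u ∉ Cy.support := by
    rw [hCys]; simp only [List.mem_map, List.mem_range]
    rintro ⟨i, hi, he⟩; exact hZyu i (by omega) he
  refine ⟨x, y, hxm, hym, hxy,
    Cx, Cy, nb_of_support_map Cx mx Zx hCxs hZxnb, nb_of_support_map Cy my Zy hCys hZynb,
    fun h => hux (Walk.fst_mem_support_of_mem_edges Cx h),
    fun h => huy (Walk.fst_mem_support_of_mem_edges Cy h), _, rfl, ?_, ?_⟩
  · -- NonBacktracking C
    set Z : ℕ → V := fun i => if i = 0 then u else if i ≤ mx+1 then Zx (i-1)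
      else if i = mx+2 then u else if i ≤ mx+my+3 then Zy (i-(mx+3)) else u with hZdef
    have hZ0 : Z 0 = u := by simp [hZdef]
    have hZa : ∀ i, 1 ≤ i → i ≤ mx+1 → Z i = Zx (i-1) := by
      intro i h1 h2; simp only [hZdef]; rw [if_neg (by omega), if_pos h2]
    have hZm2 : Z (mx+2) = u := by
      simp only [hZdef]; rw [if_neg (by omega), if_neg (by omega)]; simp
    have hZb : ∀ i, mx+3 ≤ i → i ≤ mx+my+3 → Z i = Zy (i-(mx+3)) := by
      intro i h1 h2; simp only [hZdef]
      rw [if_neg (by omega), if_neg (by omega), if_neg (by omega), if_pos h2]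
    have hZl : Z (mx+my+4) = u := by
      simp only [hZdef]
      rw [if_neg (by omega), if_neg (by omega), if_neg (by omega), if_neg (by omega)]
    have hshape : (SimpleGraph.Walk.cons hxm (Cx.append (SimpleGraph.Walk.cons hxm.symm
        (SimpleGraph.Walk.cons hym (Cy.append
          (SimpleGraph.Walk.cons hym.symm SimpleGraph.Walk.nil)))))).support
        = u :: (Cx.support ++ (u :: (Cy.support ++ [u]))) := by
      simp [Walk.support_append]
    have hsupp : (SimpleGraph.Walk.cons hxm (Cx.append (SimpleGraph.Walk.cons hxm.symm
        (SimpleGraph.Walk.cons hym (Cy.append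
          (SimpleGraph.Walk.cons hym.symm SimpleGraph.Walk.nil)))))).support
        = (List.range (mx+my+4+1)).map Z := by
      rw [hshape, hCxs, hCys]
      apply List.ext_getElem?
      intro i
      by_cases hi : i < mx + my + 5
      swap
      · have e1 : (u :: (List.map Zx (List.range (mx+1)) ++
            u :: (List.map Zy (List.range (my+1)) ++ [u])))[i]? = none :=
          List.getElem?_eq_none (by simp; omega)
        have e2 : ((List.range (mx+my+4+1)).map Z)[i]? = none :=
          List.getElem?_eq_none (by simp; omega)
        rw [e1, e2]
      · rw [show ((List.range (mx+my+4+1)).map Z)[i]? = some (Z i) from by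
          rw [List.getElem?_map, List.getElem?_range (by omega)]; rfl]
        rcases i with _ | t
        · rw [List.getElem?_cons_zero, hZ0]
        · rw [List.getElem?_cons_succ, List.getElem?_append]
          have hAlen : (((List.range (mx+1)).map Zx)).length = mx + 1 := by simp
          rw [hAlen]
          by_cases ht : t < mx + 1
          · rw [if_pos ht, List.getElem?_map, List.getElem?_range ht,
              hZa (t+1) (by omega) (by omega)]
            simp
          · rw [if_neg ht]
            cases h0 : t - (mx+1) with
            | zero =>
              rw [List.getElem?_cons_zero, show t + 1 = mx + 2 from by omega, hZm2]
            | succ r =>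
              rw [List.getElem?_cons_succ, List.getElem?_append]
              have hBlen : (((List.range (my+1)).map Zy)).length = my + 1 := by simp
              rw [hBlen]
              by_cases hr2 : r < my + 1
              · rw [if_pos hr2, List.getElem?_map, List.getElem?_range hr2,
                  show t + 1 = mx + 3 + r from by omega,
                  hZb (mx+3+r) (by omega) (by omega),
                  show mx + 3 + r - (mx+3) = r from by omega]
                rfl
              · rw [if_neg hr2, show r - (my+1) = 0 from by omega,
                  List.getElem?_cons_zero, show t + 1 = mx + my + 4 from by omega, hZl]
    refine nb_of_support_map _ (mx+my+4) Z hsupp ?_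
    intro i hi
    rcases (by omega : i = 0 ∨ (1 ≤ i ∧ i + 2 ≤ mx+1) ∨ i = mx ∨ i = mx+1 ∨ i = mx+2 ∨
        (mx+3 ≤ i ∧ i+2 ≤ mx+my+3) ∨ i = mx+my+2) with
      rfl | ⟨ha, hb⟩ | hc | rfl | rfl | ⟨ha, hb⟩ | rfl
    · rw [hZ0, hZa 2 (by omega) (by omega), show (2:ℕ) - 1 = 1 from rfl]
      exact (hZxu 1 (by omega)).symm
    · rw [hZa i (by omega) (by omega), hZa (i+2) (by omega) (by omega),
        show i + 2 - 1 = (i-1) + 2 from by omega]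
      exact hZxnb (i-1) (by omega)
    · rw [hc, hZa mx (by omega) (by omega), hZm2]
      exact hZxu (mx-1) (by omega)
    · rw [hZa (mx+1) (by omega) (by omega), show mx + 1 - 1 = mx from by omega, hZxm,
        show mx + 1 + 2 = mx + 3 from by omega, hZb (mx+3) le_rfl (by omega),
        show mx + 3 - (mx+3) = 0 from by omega, hZy0]
      exact hxy
    · rw [hZm2, show mx + 2 + 2 = mx + 3 + 1 from by omega,
        hZb (mx+3+1) (by omega) (by omega), show mx + 3 + 1 - (mx+3) = 1 from by omega]
      exact (hZyu 1 (by omega)).symm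
    · rw [hZb i ha (by omega), hZb (i+2) (by omega) (by omega),
        show i + 2 - (mx+3) = (i - (mx+3)) + 2 from by omega]
      exact hZynb _ (by omega)
    · rw [hZb (mx+my+2) (by omega) (by omega), show mx + my + 2 + 2 = mx + my + 4 from by omega,
        hZl]
      exact hZyu _ (by omega)
  · -- head? ≠ getLast?
    have hE : (SimpleGraph.Walk.cons hxm (Cx.append (SimpleGraph.Walk.cons hxm.symm
        (SimpleGraph.Walk.cons hym (Cy.append
          (SimpleGraph.Walk.cons hym.symm SimpleGraph.Walk.nil)))))).edges
        = (s(u,x) :: (Cx.edges ++ (s(x,u) :: s(u,y) :: Cy.edges))) ++ [s(y,u)] := by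
      simp [Walk.edges_append]
    rw [hE, List.getLast?_concat]
    have hhead : ((s(u,x) :: (Cx.edges ++ (s(x,u) :: s(u,y) :: Cy.edges))) ++ [s(y,u)]).head?
        = some s(u,x) := rfl
    rw [hhead]
    intro h
    rw [Option.some_inj] at h
    simp only [Sym2.eq, Sym2.rel_iff', Prod.mk.injEq, Prod.swap_prod_mk] at h
    rcases h with ⟨h1, h2⟩ | ⟨h1, h2⟩
    · exact hxm.ne h2.symm
    · exact hxy h2
end
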